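/- Suppose A ≥ e, A ∈ S, x₀ ∈ S with 1 ≤ x₀ < A and x ≤ x₀ for every x ∈ S with x ≠ A. Let m(k) = Σ_{x∈S} x·p(x)·P_{Y|X}(k|x)/P_Y(k) be the posterior mean and let Ȳ be a Poisson(x₀) random variable. Assume: (i) the second-order optimality condition Σ_{k∈ℕ} ℙ[Ȳ = k]·log m(k+1) ≥ log x₀ + 1/x₀; and (ii) β ∈ (0, 1/4] satisfies Σ_{x∈S, x<1} p(x) + p(A) ≤ 3β. Then p(A) ≥ (1 − 3β) / ( 2·A^{2Ae·log A + 2} · e^{−2A+1} ). -/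

import Mathlib

open Real

/-- Poisson channel pmf: `P_{Y|X}(y|x) = x^y e^{-x} / y!` (with `0^0 = 1`, `0! = 1`). -/
noncomputable def poissonPMF (x : ℝ) (y : ℕ) : ℝ := x ^ y * Real.exp (-x) / (Nat.factorial y)

/-- Output pmf induced by a finitely supported input: `P_Y(k) = Σ_{x ∈ S} p(x) x^k e^{-x}/k!`. -/
noncomputable def outPMF (S : Finset ℝ) (p : ℝ → ℝ) (k : ℕ) : ℝ :=
  ∑ x ∈ S, p x * poissonPMF x k

/-- Posterior mean of the input given output `k`:
`m(k) = Σ_{x ∈ S} x p(x) P_{Y|X}(k|x) / P_Y(k)`. -/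
noncomputable def postMean (S : Finset ℝ) (p : ℝ → ℝ) (k : ℕ) : ℝ :=
  ∑ x ∈ S, x * p x * poissonPMF x k / outPMF S p k

lemma poissonPMF_succ (x : ℝ) (n : ℕ) :
    poissonPMF x (n + 1) = poissonPMF x n * (x / ((n : ℝ) + 1)) := by
  unfold poissonPMF
  rw [Nat.factorial_succ, pow_succ]
  push_cast
  have h1 : ((n : ℝ) + 1) ≠ 0 := by positivity
  have h2 : ((Nat.factorial n : ℝ)) ≠ 0 := by
    exact_mod_cast Nat.factorial_ne_zero n
  field_simp

lemma poissonPMF_nonneg {x : ℝ} (hx : 0 ≤ x) (k : ℕ) : 0 ≤ poissonPMF x k := by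
  unfold poissonPMF
  have : (0:ℝ) ≤ x ^ k := pow_nonneg hx k
  positivity

set_option maxHeartbeats 6400000 in
/-- Explicit lower bound on the mass of the largest support point:
`p(A) ≥ (1 − 3β) / (2 A^{2Ae log A + 2} e^{−2A+1})`. -/
theorem mass_at_A_explicit_lower_bound
    (A : ℝ) (hA : Real.exp 1 ≤ A) (S : Finset ℝ) (hS : (S : Set ℝ) ⊆ Set.Icc 0 A)
    (p : ℝ → ℝ) (hp : ∀ x ∈ S, 0 < p x) (hpsum : ∑ x ∈ S, p x = 1)
    (hAS : A ∈ S) (x₀ : ℝ) (hx₀S : x₀ ∈ S) (hx₀1 : 1 ≤ x₀) (hx₀A : x₀ < A)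
    (hsecond : ∀ x ∈ S, x ≠ A → x ≤ x₀)
    (hopt : Real.log x₀ + 1 / x₀ ≤
      ∑' k : ℕ, poissonPMF x₀ k * Real.log (postMean S p (k + 1)))
    (β : ℝ) (hβ0 : 0 < β) (hβ4 : β ≤ 1 / 4)
    (hβsum : (∑ x ∈ S, if x < 1 then p x else 0) + p A ≤ 3 * β) :
    (1 - 3 * β) /
        (2 * A ^ (2 * A * Real.exp 1 * Real.log A + 2) * Real.exp (-(2 * A) + 1))
      ≤ p A := by
  classical
  have he1 : (2.7182818283:ℝ) < Real.exp 1 := Real.exp_one_gt_d9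
  have he2 : Real.exp 1 < 2.7182818286 := Real.exp_one_lt_d9
  have hA0 : 0 < A := lt_of_lt_of_le (Real.exp_pos 1) hA
  have hA1 : (1:ℝ) < A := lt_of_lt_of_le (by linarith) hA
  have hA27 : (2.71:ℝ) ≤ A := le_trans (by linarith) hA
  set u := Real.log A with hu_def
  have hAu : Real.exp u = A := Real.exp_log hA0
  have hu1 : (1:ℝ) ≤ u := by
    rw [hu_def, Real.le_log_iff_exp_le hA0]; simpa using hA
  have hu0 : (0:ℝ) < u := by linarith
  have hx₀0 : (0:ℝ) < x₀ := lt_of_lt_of_le one_pos hx₀1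
  have hβpos : (0:ℝ) < 1 - 3*β := by linarith
  have hpA : 0 < p A := hp A hAS
  have hxnn : ∀ x ∈ S, (0:ℝ) ≤ x := fun x hx => (hS hx).1
  have hxle : ∀ x ∈ S, x ≤ A := fun x hx => (hS hx).2
  -- D and N
  set D : ℕ → ℝ := fun k => ∑ x ∈ S, p x * (x ^ k * Real.exp (-x)) with hD_def
  set N : ℕ → ℝ := fun k => ∑ x ∈ S, x * (p x * (x ^ k * Real.exp (-x))) with hN_def
  have hterm_nn : ∀ (k : ℕ), ∀ x ∈ S, 0 ≤ p x * (x ^ k * Real.exp (-x)) := by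
    intro k x hx
    exact mul_nonneg (hp x hx).le
      (mul_nonneg (pow_nonneg (hxnn x hx) k) (Real.exp_pos _).le)
  -- mass of points ≥ 1
  have hFsum : (1 - 3*β) ≤ ∑ x ∈ S.filter (fun x => ¬ x < 1), p x := by
    have h1 : (∑ x ∈ S.filter (fun x => x < 1), p x)
        + (∑ x ∈ S.filter (fun x => ¬ x < 1), p x) = 1 := by
      rw [Finset.sum_filter_add_sum_filter_not]; exact hpsum
    have h2 : ∑ x ∈ S.filter (fun x => x < 1), p x
        = ∑ x ∈ S, if x < 1 then p x else 0 := Finset.sum_filter _ _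
    linarith [hpA.le]
  have hDlb : ∀ k, (1 - 3*β) * Real.exp (-A) ≤ D k := by
    intro k
    have h1 : ∀ x ∈ S.filter (fun x => ¬ x < 1),
        p x * Real.exp (-A) ≤ p x * (x ^ k * Real.exp (-x)) := by
      intro x hx
      rw [Finset.mem_filter] at hx
      obtain ⟨hxS, hx1⟩ := hx
      have hx1 : (1:ℝ) ≤ x := not_lt.1 hx1
      have h : Real.exp (-A) ≤ x ^ k * Real.exp (-x) := by
        calc Real.exp (-A) ≤ Real.exp (-x) :=
              Real.exp_le_exp.2 (by linarith [hxle x hxS])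
          _ = 1 * Real.exp (-x) := (one_mul _).symm
          _ ≤ x ^ k * Real.exp (-x) := by
              apply mul_le_mul_of_nonneg_right _ (Real.exp_pos _).le
              calc (1:ℝ) = 1 ^ k := (one_pow k).symm
                _ ≤ x ^ k := pow_le_pow_left₀ (by norm_num) hx1 k
      exact mul_le_mul_of_nonneg_left h (hp x hxS).le
    calc (1 - 3*β) * Real.exp (-A)
        ≤ (∑ x ∈ S.filter (fun x => ¬ x < 1), p x) * Real.exp (-A) :=
          mul_le_mul_of_nonneg_right hFsum (Real.exp_pos _).le
      _ = ∑ x ∈ S.filter (fun x => ¬ x < 1), p x * Real.exp (-A) := Finset.sum_mul _ _ _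
      _ ≤ ∑ x ∈ S.filter (fun x => ¬ x < 1), p x * (x ^ k * Real.exp (-x)) :=
          Finset.sum_le_sum h1
      _ ≤ D k := Finset.sum_le_sum_of_subset_of_nonneg (Finset.filter_subset _ _)
          (fun x hx _ => hterm_nn k x hx)
  have hDpos : ∀ k, 0 < D k := by
    intro k
    refine lt_of_lt_of_le ?_ (hDlb k)
    positivity
  have hout : ∀ k, outPMF S p k = D k / (Nat.factorial k : ℝ) := by
    intro k
    unfold outPMF poissonPMF
    rw [hD_def, Finset.sum_div]
    exact Finset.sum_congr rfl fun x _ => by ring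
  have hpost : ∀ k, postMean S p k = N k / D k := by
    intro k
    unfold postMean
    rw [← Finset.sum_div, hout k]
    have hSum : (∑ x ∈ S, x * p x * poissonPMF x k) = N k / (Nat.factorial k : ℝ) := by
      rw [hN_def, Finset.sum_div]
      refine Finset.sum_congr rfl fun x _ => ?_
      unfold poissonPMF
      ring
    rw [hSum]
    have hc : (Nat.factorial k : ℝ) ≠ 0 := by exact_mod_cast Nat.factorial_ne_zero k
    have hD : D k ≠ 0 := (hDpos k).ne'
    field_simp
  have hNpos : ∀ k, 0 < N k := by
    intro k
    refine Finset.sum_pos' (fun x hx => mul_nonneg (hxnn x hx) (hterm_nn k x hx)) ⟨A, hAS, ?_⟩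
    exact mul_pos hA0 (mul_pos hpA (mul_pos (pow_pos hA0 k) (Real.exp_pos _)))
  have hm_pos : ∀ k, 0 < postMean S p k := by
    intro k; rw [hpost k]; exact div_pos (hNpos k) (hDpos k)
  have hmA : ∀ k, postMean S p k ≤ A := by
    intro k
    rw [hpost k, div_le_iff₀ (hDpos k)]
    calc N k ≤ ∑ x ∈ S, A * (p x * (x ^ k * Real.exp (-x))) := by
          refine Finset.sum_le_sum fun x hx => ?_
          exact mul_le_mul_of_nonneg_right (hxle x hx) (hterm_nn k x hx)
      _ = A * D k := (Finset.mul_sum _ _ _).symm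
  set c : ℝ := A * p A / (1 - 3*β) with hc_def
  have hc_pos : 0 < c := div_pos (mul_pos hA0 hpA) hβpos
  have hm_ub : ∀ k, postMean S p k ≤ x₀ + c * A ^ k := by
    intro k
    have hNle : N k ≤ x₀ * D k + A * p A * Real.exp (-A) * A ^ k := by
      have hsplit : N k = A * (p A * (A ^ k * Real.exp (-A)))
          + ∑ x ∈ S.erase A, x * (p x * (x ^ k * Real.exp (-x))) := by
        rw [hN_def]
        exact (Finset.add_sum_erase S _ hAS).symm
      have h1 : ∑ x ∈ S.erase A, x * (p x * (x ^ k * Real.exp (-x)))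
          ≤ x₀ * ∑ x ∈ S.erase A, (p x * (x ^ k * Real.exp (-x))) := by
        rw [Finset.mul_sum]
        refine Finset.sum_le_sum fun x hx => ?_
        have hxS := Finset.mem_of_mem_erase hx
        have hxne := Finset.ne_of_mem_erase hx
        exact mul_le_mul_of_nonneg_right (hsecond x hxS hxne) (hterm_nn k x hxS)
      have h2 : ∑ x ∈ S.erase A, (p x * (x ^ k * Real.exp (-x))) ≤ D k :=
        Finset.sum_le_sum_of_subset_of_nonneg (Finset.erase_subset _ _)
          (fun x hx _ => hterm_nn k x hx)
      have h3 : x₀ * ∑ x ∈ S.erase A, (p x * (x ^ k * Real.exp (-x))) ≤ x₀ * D k :=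
        mul_le_mul_of_nonneg_left h2 hx₀0.le
      rw [hsplit]
      nlinarith [h1, h3]
    rw [hpost k, div_le_iff₀ (hDpos k)]
    have h3 : A * p A * Real.exp (-A) ≤ c * D k := by
      rw [hc_def, div_mul_eq_mul_div, le_div_iff₀ hβpos]
      nlinarith [hDlb k, mul_pos hA0 hpA]
    nlinarith [mul_le_mul_of_nonneg_right h3 (pow_nonneg hA0.le k), hNle]
  have hlog1 : ∀ k : ℕ, Real.log (postMean S p (k+1)) ≤ Real.log x₀ + c * A ^ (k+1) := by
    intro k
    set t : ℝ := c * A ^ (k+1) with ht_def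
    have ht_nn : 0 ≤ t := mul_nonneg hc_pos.le (pow_nonneg hA0.le _)
    have h1 : Real.log (postMean S p (k+1)) ≤ Real.log (x₀ + t) :=
      Real.log_le_log (hm_pos (k+1)) (hm_ub (k+1))
    have hpos : 0 < (x₀ + t)/x₀ := div_pos (by linarith) hx₀0
    have h3 := Real.log_le_sub_one_of_pos hpos
    rw [Real.log_div (by linarith) (ne_of_gt hx₀0)] at h3
    have h4 : (x₀ + t)/x₀ - 1 = t / x₀ := by field_simp; ring
    have h5 : t / x₀ ≤ t := div_le_self ht_nn hx₀1
    linarith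
  have hlog2 : ∀ k : ℕ, Real.log (postMean S p (k+1)) ≤ u :=
    fun k => Real.log_le_log (hm_pos (k+1)) (hmA (k+1))
  -- Poisson weights
  have hq_nn : ∀ k, 0 ≤ poissonPMF x₀ k := poissonPMF_nonneg hx₀0.le
  have hq_eq : ∀ k, poissonPMF x₀ k = (x₀ ^ k / (Nat.factorial k : ℝ)) * Real.exp (-x₀) := by
    intro k; unfold poissonPMF; ring
  have hq_sum : Summable (fun k => poissonPMF x₀ k) := by
    refine ((Real.summable_pow_div_factorial x₀).mul_right (Real.exp (-x₀))).congr fun k => ?_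
    rw [hq_eq k]
  have hq_tsum : ∑' k, poissonPMF x₀ k ≤ 1 := by
    apply Real.tsum_le_of_sum_range_le hq_nn
    intro n
    have h1 : ∑ i ∈ Finset.range n, poissonPMF x₀ i
        = (∑ i ∈ Finset.range n, x₀ ^ i / (Nat.factorial i : ℝ)) * Real.exp (-x₀) := by
      rw [Finset.sum_mul]
      exact Finset.sum_congr rfl fun i _ => hq_eq i
    rw [h1]
    calc (∑ i ∈ Finset.range n, x₀ ^ i / (Nat.factorial i : ℝ)) * Real.exp (-x₀)
        ≤ Real.exp x₀ * Real.exp (-x₀) :=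
          mul_le_mul_of_nonneg_right (Real.sum_le_exp_of_nonneg hx₀0.le n) (Real.exp_pos _).le
      _ = 1 := by rw [← Real.exp_add]; simp
  -- the cutoff K
  set K : ℕ := ⌈2*A*(Real.exp 1 * u - 1)⌉₊ with hK_def
  have heu : (1.7:ℝ) ≤ Real.exp 1 * u - 1 := by
    have h := mul_le_mul_of_nonneg_left hu1 (Real.exp_pos 1).le
    rw [mul_one] at h
    linarith
  have heu2 : (1.718:ℝ)*u ≤ Real.exp 1 * u - 1 := by
    have h := mul_le_mul_of_nonneg_right (show (2.718:ℝ) ≤ Real.exp 1 by linarith) hu0.le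
    linarith
  have harg_nn : (0:ℝ) ≤ 2*A*(Real.exp 1 * u - 1) :=
    mul_nonneg (by linarith) (by linarith)
  have hK_lb : 2*A*(Real.exp 1 * u - 1) ≤ (K:ℝ) := Nat.le_ceil _
  have hK_ub : (K:ℝ) ≤ 2*A*(Real.exp 1 * u - 1) + 1 := (Nat.ceil_lt_add_one harg_nn).le
  have hK34 : 3.4 * A ≤ (K:ℝ) := by
    refine le_trans ?_ hK_lb
    have h := mul_le_mul_of_nonneg_left heu (by linarith : (0:ℝ) ≤ 2*A)
    linarith
  have hK92 : 9.2 * u ≤ (K:ℝ) := by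
    refine le_trans ?_ hK_lb
    have h := mul_le_mul (by linarith : (5.42:ℝ) ≤ 2*A) heu2
      (by linarith : (0:ℝ) ≤ 1.718*u) (by linarith : (0:ℝ) ≤ 2*A)
    linarith
  have hK0 : (0:ℝ) < (K:ℝ) := by linarith
  have hKA : A ≤ (K:ℝ) := by linarith
  have h2x₀K : 2 * x₀ ≤ (K:ℝ) := by linarith
  -- split the tsum
  set f : ℕ → ℝ := fun k => poissonPMF x₀ k * Real.log (postMean S p (k + 1)) with hf_def
  by_cases hsf : Summable f
  swap
  · rw [tsum_eq_zero_of_not_summable hsf] at hopt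
    have h1 := Real.log_nonneg hx₀1
    have h2 : 0 < 1 / x₀ := by positivity
    linarith
  set Fn : ℕ → ℝ := fun k => if K ≤ k then poissonPMF x₀ k else 0 with hFn_def
  set g₁ : ℕ → ℝ := fun k => (Real.log x₀ + c * A ^ K) * poissonPMF x₀ k with hg₁_def
  have hcoef_nn : 0 ≤ Real.log x₀ + c * A ^ K :=
    add_nonneg (Real.log_nonneg hx₀1) (mul_nonneg hc_pos.le (pow_nonneg hA0.le K))
  have hFn_nn : ∀ k, 0 ≤ Fn k := by
    intro k; rw [hFn_def]; dsimp only; split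
    · exact hq_nn k
    · exact le_rfl
  have hFn_le : ∀ k, Fn k ≤ poissonPMF x₀ k := by
    intro k; rw [hFn_def]; dsimp only; split
    · exact le_rfl
    · exact hq_nn k
  have hFn_sum : Summable Fn := Summable.of_nonneg_of_le hFn_nn hFn_le hq_sum
  have hg₁_sum : Summable g₁ := hq_sum.mul_left _
  have hgF_sum : Summable (fun k => g₁ k + u * Fn k) := hg₁_sum.add (hFn_sum.mul_left u)
  have hfg : ∀ k, f k ≤ g₁ k + u * Fn k := by
    intro k
    rw [hf_def, hg₁_def, hFn_def]; dsimp only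
    by_cases hk : K ≤ k
    · rw [if_pos hk]
      have h1 : poissonPMF x₀ k * Real.log (postMean S p (k+1)) ≤ poissonPMF x₀ k * u :=
        mul_le_mul_of_nonneg_left (hlog2 k) (hq_nn k)
      have h2 : 0 ≤ (Real.log x₀ + c * A ^ K) * poissonPMF x₀ k :=
        mul_nonneg hcoef_nn (hq_nn k)
      nlinarith
    · rw [if_neg hk]
      have hk1 : k + 1 ≤ K := by omega
      have h1 : poissonPMF x₀ k * Real.log (postMean S p (k+1))
          ≤ poissonPMF x₀ k * (Real.log x₀ + c * A ^ (k+1)) :=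
        mul_le_mul_of_nonneg_left (hlog1 k) (hq_nn k)
      have h2 : c * A ^ (k+1) ≤ c * A ^ K :=
        mul_le_mul_of_nonneg_left (pow_le_pow_right₀ hA1.le hk1) hc_pos.le
      nlinarith [hq_nn k]
  set T : ℝ := ∑' k, Fn k with hT_def
  have hT_nn : 0 ≤ T := tsum_nonneg hFn_nn
  have hkey : 1 / x₀ ≤ c * A ^ K + u * T := by
    have h1 : ∑' k, f k ≤ ∑' k, (g₁ k + u * Fn k) := Summable.tsum_le_tsum hfg hsf hgF_sum
    have h2 : ∑' k, (g₁ k + u * Fn k) = (∑' k, g₁ k) + ∑' k, u * Fn k :=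
      Summable.tsum_add hg₁_sum (hFn_sum.mul_left u)
    have h3 : ∑' k, g₁ k = (Real.log x₀ + c * A ^ K) * ∑' k, poissonPMF x₀ k := by
      rw [hg₁_def]; exact tsum_mul_left
    have h4 : ∑' k, u * Fn k = u * T := by rw [hT_def]; exact tsum_mul_left
    have h5 : (Real.log x₀ + c * A ^ K) * (∑' k, poissonPMF x₀ k)
        ≤ (Real.log x₀ + c * A ^ K) := by
      calc (Real.log x₀ + c * A ^ K) * (∑' k, poissonPMF x₀ k)
          ≤ (Real.log x₀ + c * A ^ K) * 1 := mul_le_mul_of_nonneg_left hq_tsum hcoef_nn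
        _ = _ := mul_one _
    have h6 := hopt
    rw [hf_def] at h1
    linarith [h1, h6]
  -- tail estimate : T ≤ 2 * q K
  have hT2 : T ≤ 2 * poissonPMF x₀ K := by
    have h0 : (∑ i ∈ Finset.range K, Fn i) + ∑' i, Fn (i + K) = T :=
      Summable.sum_add_tsum_nat_add K hFn_sum
    have h1 : ∑ i ∈ Finset.range K, Fn i = 0 := by
      apply Finset.sum_eq_zero
      intro i hi
      rw [Finset.mem_range] at hi
      rw [hFn_def]; dsimp only; rw [if_neg (by omega)]
    have h2 : ∀ j : ℕ, Fn (j + K) = poissonPMF x₀ (j + K) := by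
      intro j; rw [hFn_def]; dsimp only; rw [if_pos (by omega)]
    have hgeo : ∀ j : ℕ, poissonPMF x₀ (j + K) ≤ poissonPMF x₀ K * (1/2) ^ j := by
      intro j
      induction j with
      | zero => simp
      | succ n ih =>
        have hstep : poissonPMF x₀ (n + K + 1) = poissonPMF x₀ (n + K) * (x₀ / ((n + K : ℕ) + 1)) :=
          poissonPMF_succ x₀ (n + K)
        have hpos : (0:ℝ) < ((n + K : ℕ) : ℝ) + 1 := by positivity
        have hratio : x₀ / (((n + K : ℕ) : ℝ) + 1) ≤ 1/2 := by
          rw [div_le_iff₀ hpos]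
          push_cast
          nlinarith [h2x₀K, Nat.cast_nonneg (α := ℝ) n]
        have hratio_nn : 0 ≤ x₀ / (((n + K : ℕ) : ℝ) + 1) := by positivity
        have hqn : 0 ≤ poissonPMF x₀ K * (1/2) ^ n :=
          mul_nonneg (hq_nn K) (by positivity)
        calc poissonPMF x₀ (n + 1 + K) = poissonPMF x₀ (n + K) * (x₀ / (((n + K : ℕ) : ℝ) + 1)) := by
              rw [show n + 1 + K = n + K + 1 by omega, hstep]
          _ ≤ (poissonPMF x₀ K * (1/2) ^ n) * (1/2) := by
              apply mul_le_mul ih hratio hratio_nn hqn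
          _ = poissonPMF x₀ K * (1/2) ^ (n + 1) := by ring
    have hsum_shift : Summable (fun j => poissonPMF x₀ (j + K)) :=
      (summable_nat_add_iff K).2 hq_sum
    have hsum_geo : Summable (fun j : ℕ => poissonPMF x₀ K * (1/2) ^ j) :=
      (summable_geometric_of_lt_one (by norm_num) (by norm_num)).mul_left _
    have h3 : ∑' j, Fn (j + K) ≤ ∑' j : ℕ, poissonPMF x₀ K * (1/2) ^ j := by
      refine Summable.tsum_le_tsum (fun j => ?_) (by simpa [h2] using hsum_shift) hsum_geo
      rw [h2 j]; exact hgeo j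
    have h4 : ∑' j : ℕ, poissonPMF x₀ K * (1/2) ^ j = poissonPMF x₀ K * 2 := by
      rw [tsum_mul_left, tsum_geometric_of_lt_one (by norm_num) (by norm_num)]
      norm_num
    rw [hT_def]
    nlinarith [h0, h1, h3, h4]
  -- Chernoff-type numeric bound : 4 x₀ u q(K) ≤ 1
  have hmono : x₀ ^ (K+1) * Real.exp (-x₀) ≤ A ^ (K+1) * Real.exp (-A) := by
    have hlogr : Real.log x₀ - u ≤ (x₀ - A)/A := by
      have h := Real.log_le_sub_one_of_pos (div_pos hx₀0 hA0)
      rw [Real.log_div (ne_of_gt hx₀0) (ne_of_gt hA0)] at h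
      have h4 : x₀/A - 1 = (x₀ - A)/A := by field_simp
      rw [hu_def]; linarith
    have hexp : ((K:ℝ)+1) * Real.log x₀ - x₀ ≤ ((K:ℝ)+1) * u - A := by
      have h1 : ((K:ℝ)+1) * (Real.log x₀ - u) ≤ ((K:ℝ)+1) * ((x₀ - A)/A) :=
        mul_le_mul_of_nonneg_left hlogr (by positivity)
      have h2 : ((K:ℝ)+1) * ((x₀ - A)/A) ≤ x₀ - A := by
        rw [mul_div_assoc']  -- ((K+1)*(x₀-A))/A
        rw [div_le_iff₀ hA0]
        nlinarith [hKA, hx₀A]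
      nlinarith
    have e1 : x₀ ^ (K+1) * Real.exp (-x₀) = Real.exp (((K:ℝ)+1) * Real.log x₀ - x₀) := by
      rw [Real.exp_sub, Real.exp_neg]
      rw [show ((K:ℝ)+1) = ((K+1 : ℕ) : ℝ) by push_cast; ring]
      rw [Real.exp_nat_mul, Real.exp_log hx₀0]
      rw [div_eq_mul_inv]
    have e2 : A ^ (K+1) * Real.exp (-A) = Real.exp (((K:ℝ)+1) * u - A) := by
      rw [Real.exp_sub, Real.exp_neg]
      rw [show ((K:ℝ)+1) = ((K+1 : ℕ) : ℝ) by push_cast; ring]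
      rw [Real.exp_nat_mul, hAu]
      rw [div_eq_mul_inv]
    rw [e1, e2]
    exact Real.exp_le_exp.2 hexp
  have hfact : (K:ℝ) ^ K ≤ Real.exp (K:ℝ) * (Nat.factorial K : ℝ) := by
    have hfe : (0:ℝ) < (Nat.factorial K : ℝ) := by exact_mod_cast Nat.factorial_pos K
    have hterm : (K:ℝ) ^ K / (Nat.factorial K : ℝ)
        ≤ ∑ i ∈ Finset.range (K+1), (K:ℝ) ^ i / (Nat.factorial i : ℝ) := by
      refine Finset.single_le_sum (f := fun i => (K:ℝ) ^ i / (Nat.factorial i : ℝ))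
        (fun i _ => by positivity) (Finset.self_mem_range_succ K)
    have h := Real.sum_le_exp_of_nonneg (Nat.cast_nonneg K : (0:ℝ) ≤ K) (K+1)
    have h2 : (K:ℝ) ^ K / (Nat.factorial K : ℝ) ≤ Real.exp (K:ℝ) := le_trans hterm h
    rw [div_le_iff₀ hfe] at h2
    exact h2
  have hcore : 4 * u * (A ^ (K+1) * Real.exp (-A)) * Real.exp (K:ℝ) ≤ (K:ℝ) ^ K := by
    have hlogK : u + 1.2 ≤ Real.log (K:ℝ) := by
      have h02 : Real.exp 0.2 ≤ 1.25 := by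
        have h := Real.add_one_le_exp (-0.2)
        have h2 : (0.8:ℝ) ≤ Real.exp (-0.2) := by linarith
        have h3 : Real.exp (0.2:ℝ) = (Real.exp (-0.2))⁻¹ := by
          rw [← Real.exp_neg]; norm_num
        rw [h3]
        rw [inv_le_comm₀ (Real.exp_pos _) (by norm_num)]
        linarith
      have h34 : Real.exp 1.2 ≤ 3.4 := by
        have : Real.exp (1.2:ℝ) = Real.exp 1 * Real.exp 0.2 := by
          rw [← Real.exp_add]; norm_num
        rw [this]
        nlinarith [Real.exp_pos (0.2:ℝ), Real.exp_pos (1:ℝ)]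
      rw [Real.le_log_iff_exp_le hK0]
      calc Real.exp (u + 1.2) = Real.exp u * Real.exp 1.2 := by rw [← Real.exp_add]
        _ = A * Real.exp 1.2 := by rw [hAu]
        _ ≤ A * 3.4 := mul_le_mul_of_nonneg_left h34 hA0.le
        _ ≤ (K:ℝ) := by linarith [hK34]
    have hlogu : Real.log u ≤ u - 1 := Real.log_le_sub_one_of_pos hu0
    have hlog4 : Real.log 4 ≤ 1.39 := by
      have h4 : (4:ℝ) = 2 ^ 2 := by norm_num
      rw [h4, Real.log_pow]
      have := Real.log_two_lt_d9
      push_cast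
      linarith
    have hexp_ineq : Real.log 4 + Real.log u + ((K:ℝ)+1)*u + ((K:ℝ) - A) ≤ (K:ℝ) * Real.log (K:ℝ) := by
      have h1 : (K:ℝ) * (u + 1.2) ≤ (K:ℝ) * Real.log (K:ℝ) :=
        mul_le_mul_of_nonneg_left hlogK hK0.le
      have hAu1 : u + 1 ≤ A := by
        have := Real.add_one_le_exp u
        rw [hAu] at this; linarith
      nlinarith [hK92, hu1]
    have eL : 4 * u * (A ^ (K+1) * Real.exp (-A)) * Real.exp (K:ℝ)
        = Real.exp (Real.log 4 + Real.log u + ((K:ℝ)+1)*u + ((K:ℝ) - A)) := by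
      rw [Real.exp_add, Real.exp_add, Real.exp_add]
      rw [Real.exp_log (by norm_num : (0:ℝ) < 4), Real.exp_log hu0]
      rw [Real.exp_sub]
      rw [show ((K:ℝ)+1) * u = ((K+1 : ℕ) : ℝ) * u by push_cast; ring]
      rw [Real.exp_nat_mul, hAu, Real.exp_neg]
      field_simp
    have eR : (K:ℝ) ^ K = Real.exp ((K:ℝ) * Real.log (K:ℝ)) := by
      rw [Real.exp_nat_mul, Real.exp_log hK0]
    rw [eL, eR]
    exact Real.exp_le_exp.2 hexp_ineq
  have htail : u * T ≤ 1 / (2 * x₀) := by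
    have hfe : (0:ℝ) < (Nat.factorial K : ℝ) := by exact_mod_cast Nat.factorial_pos K
    have hqK : poissonPMF x₀ K = x₀ ^ K * Real.exp (-x₀) / (Nat.factorial K : ℝ) := rfl
    have hmain : 4 * u * (x₀ * poissonPMF x₀ K) ≤ 1 := by
      have e1 : 4 * u * (x₀ * poissonPMF x₀ K)
          = (4 * u * (x₀ ^ (K+1) * Real.exp (-x₀))) / (Nat.factorial K : ℝ) := by
        rw [hqK, pow_succ]
        field_simp
      rw [e1, div_le_one hfe]
      have h2 : 4 * u * (x₀ ^ (K+1) * Real.exp (-x₀)) ≤ 4 * u * (A ^ (K+1) * Real.exp (-A)) :=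
        mul_le_mul_of_nonneg_left hmono (by positivity)
      have h3 : 4 * u * (A ^ (K+1) * Real.exp (-A)) ≤ (Nat.factorial K : ℝ) := by
        have h4 := hcore
        have h5 := hfact
        have h6 : 4 * u * (A ^ (K+1) * Real.exp (-A)) * Real.exp (K:ℝ)
            ≤ Real.exp (K:ℝ) * (Nat.factorial K : ℝ) := le_trans h4 h5
        have h7 : (0:ℝ) < Real.exp (K:ℝ) := Real.exp_pos _
        exact le_of_mul_le_mul_right (by linarith) h7
      linarith
    have h8 : u * T ≤ u * (2 * poissonPMF x₀ K) := mul_le_mul_of_nonneg_left hT2 hu0.le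
    have h9 : u * (2 * poissonPMF x₀ K) ≤ 1 / (2 * x₀) := by
      rw [le_div_iff₀ (by positivity : (0:ℝ) < 2 * x₀)]
      linarith [hmain]
    linarith
  -- conclude : p A ≥ (1-3β)/(2 x₀ A^{K+1})
  have hhalf : 1 / (2 * x₀) ≤ c * A ^ K := by
    have : 1 / x₀ = 2 * (1 / (2 * x₀)) := by field_simp
    linarith [hkey, htail]
  have hpA_lb : (1 - 3*β) / (2 * x₀ * A ^ (K+1)) ≤ p A := by
    rw [div_le_iff₀ (by positivity : (0:ℝ) < 2 * x₀ * A ^ (K+1))]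
    have h1 : c * A ^ K * (1 - 3*β) = A * p A * A ^ K := by
      rw [hc_def]; field_simp
    have h2 : (1 / (2 * x₀)) * (1 - 3*β) ≤ c * A ^ K * (1 - 3*β) :=
      mul_le_mul_of_nonneg_right hhalf hβpos.le
    have h3 : 0 < 1 / (2 * x₀) := by positivity
    have h4 : 1 - 3*β ≤ 2 * x₀ * (A * p A * A ^ K) := by
      rw [h1] at h2
      have h5 : (1 / (2 * x₀)) * (1 - 3*β) * (2 * x₀) ≤ A * p A * A ^ K * (2 * x₀) :=
        mul_le_mul_of_nonneg_right h2 (by positivity)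
      have h6 : (1 / (2 * x₀)) * (1 - 3*β) * (2 * x₀) = 1 - 3*β := by field_simp
      nlinarith
    rw [pow_succ]
    linarith [h4]
  refine le_trans ?_ hpA_lb
  have hden_le : 2 * x₀ * A ^ (K+1)
      ≤ 2 * A ^ (2 * A * Real.exp 1 * Real.log A + 2) * Real.exp (-(2 * A) + 1) := by
    have e1 : A ^ (2 * A * Real.exp 1 * Real.log A + 2)
        = Real.exp ((2 * A * Real.exp 1 * u + 2) * u) := by
      rw [Real.rpow_def_of_pos hA0, ← hu_def]
      ring_nf
    have e2 : (A : ℝ) ^ (K+1) = Real.exp (((K:ℝ)+1) * u) := by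
      rw [show ((K:ℝ)+1) = ((K+1 : ℕ) : ℝ) by push_cast; ring]
      rw [Real.exp_nat_mul, hAu]
    have hx₀A' : x₀ ≤ Real.exp u := by rw [hAu]; linarith
    calc 2 * x₀ * A ^ (K+1) ≤ 2 * Real.exp u * Real.exp (((K:ℝ)+1) * u) := by
          rw [e2]
          have h := mul_le_mul_of_nonneg_right hx₀A' (Real.exp_pos (((K:ℝ)+1) * u)).le
          linarith
      _ = 2 * Real.exp (((K:ℝ)+2) * u) := by
          rw [mul_assoc, ← Real.exp_add]
          ring_nf
      _ ≤ 2 * Real.exp ((2 * A * Real.exp 1 * u + 2) * u + (-(2*A) + 1)) := by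
          have hexp1 : ((K:ℝ)+2) * u ≤ (2 * A * Real.exp 1 * u + 2) * u + (-(2*A) + 1) := by
            have hprod : 0 ≤ (u - 1) * (2*A - 1) :=
              mul_nonneg (by linarith) (by linarith)
            have hKu := mul_le_mul_of_nonneg_right hK_ub hu0.le
            nlinarith [hprod, hKu]
          have := Real.exp_le_exp.2 hexp1
          linarith
      _ = 2 * A ^ (2 * A * Real.exp 1 * Real.log A + 2) * Real.exp (-(2 * A) + 1) := by
          rw [e1, Real.exp_add]
          ring
  have hden_pos : (0:ℝ) < 2 * x₀ * A ^ (K+1) := by positivity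
  exact div_le_div_of_nonneg_left hβpos.le hden_pos hden_le
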